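/- Consider K-user secure summation with user selection over F_q with inputs of length L. Then for every subset U ⊆ [K], every k ∈ U, and every proper subset V ⊊ U\{k}: H(W_k | X_k^U, (W_i, X_i^U)_{i∈V}) ≥ L·log₂ q. -/

import Mathlib

open scoped BigOperators

open Classical in
/-- The probability that the finitely-valued random variable `X` takes the value `s`,
under the probability weights `μ` on the finite sample space `Ω`. -/
noncomputable def probOf {Ω S : Type*} [Fintype Ω] (μ : Ω → ℝ) (X : Ω → S) (s : S) : ℝ :=
  ∑ ω ∈ Finset.univ.filter (fun ω => X ω = s), μ ω

/-- Shannon entropy (in bits) of a finitely-valued random variable. -/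
noncomputable def Hent {Ω S : Type*} [Fintype Ω] [Fintype S] (μ : Ω → ℝ) (X : Ω → S) : ℝ :=
  - ∑ s : S, probOf μ X s * Real.logb 2 (probOf μ X s)

/-- Conditional entropy H(X | Y) (in bits). -/
noncomputable def Hcond {Ω S T : Type*} [Fintype Ω] [Fintype S] [Fintype T]
    (μ : Ω → ℝ) (X : Ω → S) (Y : Ω → T) : ℝ :=
  Hent μ (fun ω => (X ω, Y ω)) - Hent μ Y

/-- Mutual information I(X ; Y) (in bits). -/
noncomputable def MI {Ω S T : Type*} [Fintype Ω] [Fintype S] [Fintype T]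
    (μ : Ω → ℝ) (X : Ω → S) (Y : Ω → T) : ℝ :=
  Hent μ X + Hent μ Y - Hent μ (fun ω => (X ω, Y ω))

/-- Conditional mutual information I(X ; Y | Z) (in bits). -/
noncomputable def CMI {Ω S T U : Type*} [Fintype Ω] [Fintype S] [Fintype T] [Fintype U]
    (μ : Ω → ℝ) (X : Ω → S) (Y : Ω → T) (Z : Ω → U) : ℝ :=
  Hcond μ X Z - Hcond μ X (fun ω => (Y ω, Z ω))

section Core
variable {Ω : Type*} [Fintype Ω] (μ : Ω → ℝ)

lemma probOf_nonneg (hμ0 : ∀ ω, 0 ≤ μ ω) {S : Type*} (X : Ω → S) (s : S) :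
    0 ≤ probOf μ X s := Finset.sum_nonneg fun ω _ => hμ0 ω

lemma sum_probOf {S : Type*} [Fintype S] (X : Ω → S) :
    ∑ s : S, probOf μ X s = ∑ ω, μ ω := by
  classical
  unfold probOf
  rw [← Finset.sum_fiberwise Finset.univ X μ]

lemma sum_mul_comp {S : Type*} [Fintype S] (X : Ω → S) (g : S → ℝ) :
    ∑ s : S, probOf μ X s * g s = ∑ ω, μ ω * g (X ω) := by
  classical
  rw [← Finset.sum_fiberwise Finset.univ X (fun ω => μ ω * g (X ω))]
  refine Finset.sum_congr rfl fun s _ => ?_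
  rw [probOf, Finset.sum_mul]
  refine Finset.sum_congr (Finset.filter_congr_decidable _ _ _) fun ω hω => ?_
  rw [(Finset.mem_filter.1 hω).2]

lemma le_probOf (hμ0 : ∀ ω, 0 ≤ μ ω) {S : Type*} (X : Ω → S) (ω : Ω) :
    μ ω ≤ probOf μ X (X ω) := by
  classical
  have : ω ∈ Finset.univ.filter (fun ω' => X ω' = X ω) := by simp
  exact Finset.single_le_sum (fun i _ => hμ0 i) this

lemma probOf_le_probOf (hμ0 : ∀ ω, 0 ≤ μ ω) {S T : Type*} (X : Ω → S) (Y : Ω → T)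
    (s : S) (t : T) (h : ∀ ω, X ω = s → Y ω = t) :
    probOf μ X s ≤ probOf μ Y t := by
  classical
  refine Finset.sum_le_sum_of_subset_of_nonneg ?_ (fun i _ _ => hμ0 i)
  intro ω hω
  simp only [Finset.mem_filter, Finset.mem_univ, true_and] at *
  exact h ω hω

lemma Hent_omega {S : Type*} [Fintype S] (X : Ω → S) :
    Hent μ X = - ∑ ω, μ ω * Real.logb 2 (probOf μ X (X ω)) := by
  rw [Hent, sum_mul_comp]

lemma probOf_congr_fiber {S T : Type*} (X : Ω → S) (Y : Ω → T)
    (h : ∀ ω ω', X ω = X ω' ↔ Y ω = Y ω') (ω : Ω) :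
    probOf μ X (X ω) = probOf μ Y (Y ω) := by
  classical
  unfold probOf
  refine Finset.sum_congr ?_ fun _ _ => rfl
  refine Finset.filter_congr fun ω' _ => ?_
  constructor
  · intro h'; exact iff_of_eq (congrArg _ rfl) |>.mp ((h ω' ω).1 h')
  · intro h'; exact (h ω' ω).2 h'

lemma Hent_congr {S T : Type*} [Fintype S] [Fintype T] (X : Ω → S) (Y : Ω → T)
    (h : ∀ ω ω', X ω = X ω' ↔ Y ω = Y ω') :
    Hent μ X = Hent μ Y := by
  rw [Hent_omega, Hent_omega]
  congr 1
  exact Finset.sum_congr rfl fun ω _ => by rw [probOf_congr_fiber μ X Y h ω]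


lemma probOf_eq_sum_ite {S : Type*} (X : Ω → S) (s : S) [DecidablePred fun ω => X ω = s] :
    probOf μ X s = ∑ ω, if X ω = s then μ ω else 0 := by
  classical
  rw [probOf, Finset.sum_filter]
  exact Finset.sum_congr rfl fun ω _ => by split_ifs <;> simp_all

lemma sum_probOf_pair_fst {S T : Type*} [Fintype S] (X : Ω → S) (Y : Ω → T) (t : T) :
    ∑ s : S, probOf μ (fun ω => (X ω, Y ω)) (s, t) = probOf μ Y t := by
  classical
  simp only [probOf_eq_sum_ite]
  rw [Finset.sum_comm]
  refine Finset.sum_congr rfl fun ω _ => ?_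
  simp [Prod.ext_iff, ite_and]

open Classical in
lemma probOf_comp {S T : Type*} [Fintype S] (X : Ω → S) (φ : S → T) (t : T) :
    probOf μ (fun ω => φ (X ω)) t
      = ∑ s : S, if φ s = t then probOf μ X s else 0 := by
  classical
  have : ∀ s : S, (if φ s = t then probOf μ X s else 0)
      = ∑ ω, if φ s = t ∧ X ω = s then μ ω else 0 := by
    intro s
    split_ifs with h <;> simp [probOf_eq_sum_ite, h]
  rw [Finset.sum_congr rfl fun s _ => this s, Finset.sum_comm, probOf_eq_sum_ite]
  refine Finset.sum_congr rfl fun ω _ => ?_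
  have e : ∀ x : S, (if φ x = t ∧ X ω = x then μ ω else 0)
      = (if X ω = x then (if φ x = t then μ ω else 0) else 0) := by
    intro x; by_cases h1 : X ω = x <;> by_cases h2 : φ x = t <;> simp [h1, h2]
  rw [Finset.sum_congr rfl fun x _ => e x, Finset.sum_ite_eq]
  simp

lemma Hent_submod {S T U : Type*} [Fintype S] [Fintype T] [Fintype U]
    (hμ0 : ∀ ω, 0 ≤ μ ω) (hμ1 : ∑ ω, μ ω = 1)
    (A : Ω → S) (B : Ω → T) (C : Ω → U) :
    Hent μ (fun ω => (A ω, B ω, C ω)) + Hent μ C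
      ≤ Hent μ (fun ω => (A ω, C ω)) + Hent μ (fun ω => (B ω, C ω)) := by
  classical
  set pAC : S × U → ℝ := probOf μ (fun ω => (A ω, C ω)) with hpAC
  set pBC : T × U → ℝ := probOf μ (fun ω => (B ω, C ω)) with hpBC
  set pABC : S × T × U → ℝ := probOf μ (fun ω => (A ω, B ω, C ω)) with hpABC
  set pC : U → ℝ := probOf μ C with hpC
  set f : S × T × U → ℝ :=
    fun v => pAC (v.1, v.2.2) * pBC (v.2.1, v.2.2) * (pABC v)⁻¹ * (pC v.2.2)⁻¹ with hf
  have hACn : ∀ v, 0 ≤ pAC v := probOf_nonneg μ hμ0 _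
  have hBCn : ∀ v, 0 ≤ pBC v := probOf_nonneg μ hμ0 _
  have hABCn : ∀ v, 0 ≤ pABC v := probOf_nonneg μ hμ0 _
  have hCn : ∀ v, 0 ≤ pC v := probOf_nonneg μ hμ0 _
  have key : ∑ ω, μ ω * f (A ω, B ω, C ω) ≤ 1 := by
    rw [← sum_mul_comp μ (fun ω => (A ω, B ω, C ω)) f]
    have step1 : ∀ v : S × T × U,
        pABC v * f v ≤ pAC (v.1, v.2.2) * pBC (v.2.1, v.2.2) * (pC v.2.2)⁻¹ := by
      intro v
      rcases (hABCn v).eq_or_lt with h | h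
      · rw [← h, zero_mul]
        exact mul_nonneg (mul_nonneg (hACn _) (hBCn _)) (inv_nonneg.2 (hCn _))
      · refine le_of_eq ?_
        rw [hf]
        rw [show pABC v * (pAC (v.1, v.2.2) * pBC (v.2.1, v.2.2) * (pABC v)⁻¹ * (pC v.2.2)⁻¹)
            = (pABC v * (pABC v)⁻¹) * (pAC (v.1, v.2.2) * pBC (v.2.1, v.2.2) * (pC v.2.2)⁻¹)
            from by ring, mul_inv_cancel₀ h.ne', one_mul]
    calc ∑ v : S × T × U, pABC v * f v
        ≤ ∑ v : S × T × U, pAC (v.1, v.2.2) * pBC (v.2.1, v.2.2) * (pC v.2.2)⁻¹ :=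
          Finset.sum_le_sum fun v _ => step1 v
      _ = ∑ c : U, ∑ a : S, ∑ b : T, pAC (a, c) * pBC (b, c) * (pC c)⁻¹ := by
          rw [Fintype.sum_prod_type, Finset.sum_comm, Fintype.sum_prod_type, Finset.sum_comm]
          exact Finset.sum_congr rfl fun c _ => Finset.sum_comm
      _ = ∑ c : U, (∑ a : S, pAC (a, c)) * (∑ b : T, pBC (b, c)) * (pC c)⁻¹ := by
          refine Finset.sum_congr rfl fun c _ => ?_
          rw [Finset.sum_mul_sum, Finset.sum_mul]
          refine Finset.sum_congr rfl fun a _ => ?_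
          rw [Finset.sum_mul]
      _ = ∑ c : U, pC c * pC c * (pC c)⁻¹ := by
          refine Finset.sum_congr rfl fun c _ => ?_
          rw [sum_probOf_pair_fst, sum_probOf_pair_fst]
      _ ≤ ∑ c : U, pC c := by
          refine Finset.sum_le_sum fun c _ => ?_
          rcases (hCn c).eq_or_lt with h | h
          · rw [← h]; simp
          · rw [mul_inv_cancel_right₀ h.ne']
      _ = 1 := by rw [hpC, sum_probOf, hμ1]
  have hl2 : (0:ℝ) < Real.log 2 := Real.log_pos one_lt_two
  have main : ∀ ω, μ ω * Real.logb 2 (pAC (A ω, C ω)) + μ ω * Real.logb 2 (pBC (B ω, C ω))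
      - μ ω * Real.logb 2 (pABC (A ω, B ω, C ω)) - μ ω * Real.logb 2 (pC (C ω))
      ≤ (μ ω * f (A ω, B ω, C ω) - μ ω) / Real.log 2 := by
    intro ω
    rcases (hμ0 ω).eq_or_lt with h | h
    · rw [← h]; simp
    · have h1 : 0 < pABC (A ω, B ω, C ω) := lt_of_lt_of_le h (le_probOf μ hμ0 _ ω)
      have h2 : 0 < pAC (A ω, C ω) := lt_of_lt_of_le h (le_probOf μ hμ0 _ ω)
      have h3 : 0 < pBC (B ω, C ω) := lt_of_lt_of_le h (le_probOf μ hμ0 _ ω)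
      have h4 : 0 < pC (C ω) := lt_of_lt_of_le h (le_probOf μ hμ0 _ ω)
      have hr : 0 < f (A ω, B ω, C ω) := by
        rw [hf]
        exact mul_pos (mul_pos (mul_pos h2 h3) (inv_pos.2 h1)) (inv_pos.2 h4)
      have heq : μ ω * Real.logb 2 (pAC (A ω, C ω)) + μ ω * Real.logb 2 (pBC (B ω, C ω))
          - μ ω * Real.logb 2 (pABC (A ω, B ω, C ω)) - μ ω * Real.logb 2 (pC (C ω))
          = μ ω * (Real.log (f (A ω, B ω, C ω)) / Real.log 2) := by
        simp only [hf]
        simp only [Real.logb]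
        rw [Real.log_mul (by positivity) (by positivity),
            Real.log_mul (by positivity) (by positivity),
            Real.log_mul (by positivity) (by positivity),
            Real.log_inv, Real.log_inv]
        ring
      rw [heq]
      calc μ ω * (Real.log (f (A ω, B ω, C ω)) / Real.log 2)
          ≤ μ ω * ((f (A ω, B ω, C ω) - 1) / Real.log 2) := by
            apply mul_le_mul_of_nonneg_left _ (hμ0 ω)
            exact (div_le_div_iff_of_pos_right hl2).2 (Real.log_le_sub_one_of_pos hr)
        _ = (μ ω * f (A ω, B ω, C ω) - μ ω) / Real.log 2 := by ring
  have total : ∑ ω, (μ ω * Real.logb 2 (pAC (A ω, C ω)) + μ ω * Real.logb 2 (pBC (B ω, C ω))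
      - μ ω * Real.logb 2 (pABC (A ω, B ω, C ω)) - μ ω * Real.logb 2 (pC (C ω))) ≤ 0 := by
    calc ∑ ω, (μ ω * Real.logb 2 (pAC (A ω, C ω)) + μ ω * Real.logb 2 (pBC (B ω, C ω))
        - μ ω * Real.logb 2 (pABC (A ω, B ω, C ω)) - μ ω * Real.logb 2 (pC (C ω)))
        ≤ ∑ ω, (μ ω * f (A ω, B ω, C ω) - μ ω) / Real.log 2 :=
          Finset.sum_le_sum fun ω _ => main ω
      _ = ((∑ ω, μ ω * f (A ω, B ω, C ω)) - 1) / Real.log 2 := by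
          rw [← Finset.sum_div, Finset.sum_sub_distrib, hμ1]
      _ ≤ 0 := div_nonpos_of_nonpos_of_nonneg (by linarith) hl2.le
  have expand := total
  rw [Hent_omega μ (fun ω => (A ω, B ω, C ω)), Hent_omega μ C,
      Hent_omega μ (fun ω => (A ω, C ω)), Hent_omega μ (fun ω => (B ω, C ω))]
  simp only [Finset.sum_sub_distrib, Finset.sum_add_distrib] at expand
  linarith

end Core

section Derived
variable {Ω : Type*} [Fintype Ω] (μ : Ω → ℝ) (hμ0 : ∀ ω, 0 ≤ μ ω) (hμ1 : ∑ ω, μ ω = 1)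
include hμ0 hμ1

lemma CMI_nonneg {S T U : Type*} [Fintype S] [Fintype T] [Fintype U]
    (X : Ω → S) (Y : Ω → T) (Z : Ω → U) : 0 ≤ CMI μ X Y Z := by
  have h := Hent_submod μ hμ0 hμ1 X Y Z
  unfold CMI Hcond
  simp only []
  linarith

lemma Hent_unit (c : Unit) : Hent μ (fun _ : Ω => c) = 0 := by
  classical
  have : probOf μ (fun _ : Ω => c) c = 1 := by
    rw [probOf_eq_sum_ite]
    simpa using hμ1
  rw [Hent_omega]
  simp [this]

lemma MI_nonneg {S T : Type*} [Fintype S] [Fintype T]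
    (X : Ω → S) (Y : Ω → T) : 0 ≤ MI μ X Y := by
  have h := Hent_submod μ hμ0 hμ1 X Y (fun _ => ())
  have c1 : Hent μ (fun ω => (X ω, Y ω, ())) = Hent μ (fun ω => (X ω, Y ω)) :=
    Hent_congr μ _ _ (fun ω ω' => by simp [Prod.ext_iff])
  have c2 : Hent μ (fun ω => (X ω, ())) = Hent μ X :=
    Hent_congr μ _ _ (fun ω ω' => by simp [Prod.ext_iff])
  have c3 : Hent μ (fun ω => (Y ω, ())) = Hent μ Y :=
    Hent_congr μ _ _ (fun ω ω' => by simp [Prod.ext_iff])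
  have c4 := Hent_unit μ hμ0 hμ1 ()
  unfold MI
  linarith

/-- chain rule: I(X;(Y,Z)) = I(X;Z) + I(X;Y|Z) -/
lemma MI_chain {S T U : Type*} [Fintype S] [Fintype T] [Fintype U]
    (X : Ω → S) (Y : Ω → T) (Z : Ω → U) :
    MI μ X (fun ω => (Y ω, Z ω)) = MI μ X Z + CMI μ X Y Z := by
  unfold MI CMI Hcond
  simp only []
  ring

/-- data processing: I(A; φ∘G) ≤ I(A;G) -/
lemma MI_data_proc {S T T' : Type*} [Fintype S] [Fintype T] [Fintype T']
    (A : Ω → S) (G : Ω → T) (φ : T → T') :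
    MI μ A (fun ω => φ (G ω)) ≤ MI μ A G := by
  have h := CMI_nonneg μ hμ0 hμ1 G A (fun ω => φ (G ω))
  have c1 : Hent μ (fun ω => (G ω, φ (G ω))) = Hent μ G :=
    Hent_congr μ _ _ (fun ω ω' => by
      constructor
      · intro hh; simpa using congrArg Prod.fst hh
      · intro hh; simp [Prod.ext_iff, hh])
  have c2 : Hent μ (fun ω => (G ω, (A ω, φ (G ω)))) = Hent μ (fun ω => (A ω, G ω)) :=
    Hent_congr μ _ _ (fun ω ω' => by
      simp only [Prod.ext_iff]
      constructor
      · rintro ⟨h1, h2, h3⟩; exact ⟨h2, h1⟩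
      · rintro ⟨h1, h2⟩; exact ⟨h2, h1, by rw [h2]⟩)
  unfold CMI Hcond at h
  unfold MI
  simp only [] at *
  linarith

/-- I(A;C|B) ≤ I((A,B);C) -/
lemma CMI_le_MI_pair {S T U : Type*} [Fintype S] [Fintype T] [Fintype U]
    (A : Ω → S) (B : Ω → T) (C : Ω → U) :
    CMI μ A C B ≤ MI μ (fun ω => (A ω, B ω)) C := by
  have h := MI_nonneg μ hμ0 hμ1 C B
  have c1 : Hent μ (fun ω => ((A ω, B ω), C ω)) = Hent μ (fun ω => (A ω, (C ω, B ω))) :=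
    Hent_congr μ _ _ (fun ω ω' => by simp only [Prod.ext_iff]; tauto)
  unfold MI CMI Hcond at *
  simp only [] at *
  linarith

/-- I(X;C) ≤ I(X;(C,S)) -/
lemma MI_le_MI_pair_right {S T U : Type*} [Fintype S] [Fintype T] [Fintype U]
    (X : Ω → S) (C : Ω → T) (Y : Ω → U) :
    MI μ X C ≤ MI μ X (fun ω => (C ω, Y ω)) := by
  have h := CMI_nonneg μ hμ0 hμ1 Y X C
  have c1 : Hent μ (fun ω => (Y ω, C ω)) = Hent μ (fun ω => (C ω, Y ω)) :=
    Hent_congr μ _ _ (fun ω ω' => by simp only [Prod.ext_iff]; tauto)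
  have c2 : Hent μ (fun ω => (Y ω, (X ω, C ω))) = Hent μ (fun ω => (X ω, (C ω, Y ω))) :=
    Hent_congr μ _ _ (fun ω ω' => by simp only [Prod.ext_iff]; tauto)
  unfold MI CMI Hcond at *
  simp only [] at *
  linarith

/-- monotonicity of CMI in the first argument: if P = ψ ∘ R then I(P;C|Z) ≤ I(R;C|Z) -/
lemma CMI_mono_left {S S' T U : Type*} [Fintype S] [Fintype S'] [Fintype T] [Fintype U]
    (R : Ω → S) (ψ : S → S') (C : Ω → T) (Z : Ω → U) :
    CMI μ (fun ω => ψ (R ω)) C Z ≤ CMI μ R C Z := by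
  have h := CMI_nonneg μ hμ0 hμ1 R C (fun ω => (ψ (R ω), Z ω))
  have c1 : Hent μ (fun ω => (R ω, (ψ (R ω), Z ω))) = Hent μ (fun ω => (R ω, Z ω)) :=
    Hent_congr μ _ _ (fun ω ω' => by
      simp only [Prod.ext_iff]
      constructor
      · rintro ⟨h1, h2, h3⟩; exact ⟨h1, h3⟩
      · rintro ⟨h1, h2⟩; exact ⟨h1, by rw [h1], h2⟩)
  have c2 : Hent μ (fun ω => (R ω, (C ω, (ψ (R ω), Z ω))))
      = Hent μ (fun ω => (R ω, (C ω, Z ω))) :=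
    Hent_congr μ _ _ (fun ω ω' => by
      simp only [Prod.ext_iff]
      constructor
      · rintro ⟨h1, h2, h3, h4⟩; exact ⟨h1, h2, h4⟩
      · rintro ⟨h1, h2, h3⟩; exact ⟨h1, h2, by rw [h1], h3⟩)
  have c3 : Hent μ (fun ω => (C ω, (ψ (R ω), Z ω)))
      = Hent μ (fun ω => (ψ (R ω), (C ω, Z ω))) :=
    Hent_congr μ _ _ (fun ω ω' => by simp only [Prod.ext_iff]; tauto)
  unfold CMI Hcond at *
  simp only [] at *
  linarith

end Derived

section Unif
variable {Ω : Type*} [Fintype Ω] (μ : Ω → ℝ)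

lemma sum_probOf_pair_snd {S T : Type*} [Fintype T] (X : Ω → S) (Y : Ω → T) (s : S) :
    ∑ t : T, probOf μ (fun ω => (X ω, Y ω)) (s, t) = probOf μ X s := by
  classical
  simp only [probOf_eq_sum_ite]
  rw [Finset.sum_comm]
  refine Finset.sum_congr rfl fun ω _ => ?_
  simp [Prod.ext_iff, ite_and]

lemma Hent_unif {S : Type*} [Fintype S] [Nonempty S] (X : Ω → S)
    (h : ∀ s, probOf μ X s = (Fintype.card S : ℝ)⁻¹) :
    Hent μ X = Real.logb 2 (Fintype.card S) := by
  have hc : (0:ℝ) < Fintype.card S := by exact_mod_cast Fintype.card_pos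
  rw [Hent]
  simp only [h]
  rw [Finset.sum_const, Finset.card_univ, Real.logb_inv, nsmul_eq_mul]
  field_simp

/-- if `X` is uniform (constant prob `c`) and the fibers of `φ` can be mapped
into each other by bijections, then `φ ∘ X` is uniform. -/
lemma probOf_comp_unif {S T : Type*} [Fintype S] [Fintype T] (hμ1 : ∑ ω, μ ω = 1)
    (X : Ω → S) (φ : S → T) (c : ℝ) (hc : ∀ s, probOf μ X s = c)
    (he : ∀ t t' : T, ∃ e : S ≃ S, ∀ s, φ s = t → φ (e s) = t') :
    ∀ t, probOf μ (fun ω => φ (X ω)) t = (Fintype.card T : ℝ)⁻¹ := by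
  classical
  have hcard : ∀ t t' : T,
      (Finset.univ.filter fun s => φ s = t).card
        = (Finset.univ.filter fun s => φ s = t').card := by
    have hle : ∀ t t' : T,
        (Finset.univ.filter fun s => φ s = t).card
          ≤ (Finset.univ.filter fun s => φ s = t').card := by
      intro t t'
      obtain ⟨e, hee⟩ := he t t'
      refine Finset.card_le_card_of_injOn e (fun w hw => ?_) e.injective.injOn
      simp only [Finset.coe_filter, Finset.mem_coe, Set.mem_setOf_eq, Finset.mem_filter, Finset.mem_univ, true_and] at *
      exact hee w hw
    exact fun t t' => le_antisymm (hle t t') (hle t' t)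
  have hval : ∀ t t' : T, probOf μ (fun ω => φ (X ω)) t = probOf μ (fun ω => φ (X ω)) t' := by
    intro t t'
    rw [probOf_comp, probOf_comp, ← Finset.sum_filter, ← Finset.sum_filter,
        Finset.sum_congr rfl (fun s _ => hc s), Finset.sum_congr rfl (fun s _ => hc s),
        Finset.sum_const, Finset.sum_const, hcard t t']
  intro t
  have htot : (Fintype.card T : ℝ) * probOf μ (fun ω => φ (X ω)) t = 1 := by
    have h1 := sum_probOf μ (fun ω => φ (X ω))
    rw [hμ1] at h1
    rw [← h1, Finset.sum_congr rfl (fun t' _ => hval t' t), Finset.sum_const,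
        Finset.card_univ, nsmul_eq_mul]
  have hcardpos : (0:ℝ) < Fintype.card T := by
    have : Nonempty T := ⟨t⟩
    exact_mod_cast Fintype.card_pos
  rw [inv_eq_one_div, eq_div_iff hcardpos.ne', mul_comm]
  exact htot

/-- marginal of a uniform pair is uniform (first coordinate). -/
lemma probOf_fst_unif {S T : Type*} [Fintype S] [Fintype T] (hμ1 : ∑ ω, μ ω = 1)
    (X : Ω → S) (Y : Ω → T)
    (h : ∀ v : S × T, probOf μ (fun ω => (X ω, Y ω)) v = (Fintype.card (S × T) : ℝ)⁻¹)
    (s : S) : probOf μ X s = (Fintype.card S : ℝ)⁻¹ := by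
  classical
  have hST : Nonempty (S × T) := by
    by_contra hE
    have h0 := sum_probOf μ (fun ω => (X ω, Y ω))
    rw [hμ1] at h0
    rw [Finset.univ_eq_empty_iff.2 (not_nonempty_iff.mp hE)] at h0
    simp at h0
  have hT : (0:ℝ) < Fintype.card T := by
    obtain ⟨⟨a, b⟩⟩ := hST
    have : Nonempty T := ⟨b⟩
    exact_mod_cast Fintype.card_pos
  rw [← sum_probOf_pair_snd μ X Y s, Finset.sum_congr rfl (fun t _ => h (s, t)),
      Finset.sum_const, Finset.card_univ, nsmul_eq_mul, Fintype.card_prod]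
  push_cast
  rw [mul_inv]
  rw [show (Fintype.card T : ℝ) * ((Fintype.card S : ℝ)⁻¹ * (Fintype.card T : ℝ)⁻¹)
      = ((Fintype.card T : ℝ) * (Fintype.card T : ℝ)⁻¹) * (Fintype.card S : ℝ)⁻¹ from by ring]
  rw [mul_inv_cancel₀ hT.ne', one_mul]

lemma probOf_snd_unif {S T : Type*} [Fintype S] [Fintype T] (hμ1 : ∑ ω, μ ω = 1)
    (X : Ω → S) (Y : Ω → T)
    (h : ∀ v : S × T, probOf μ (fun ω => (X ω, Y ω)) v = (Fintype.card (S × T) : ℝ)⁻¹)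
    (t : T) : probOf μ Y t = (Fintype.card T : ℝ)⁻¹ := by
  classical
  have h' : ∀ v : T × S, probOf μ (fun ω => (Y ω, X ω)) v = (Fintype.card (T × S) : ℝ)⁻¹ := by
    rintro ⟨b, a⟩
    have e1 : probOf μ (fun ω => (Y ω, X ω)) (b, a) = probOf μ (fun ω => (X ω, Y ω)) (a, b) := by
      rw [probOf_eq_sum_ite, probOf_eq_sum_ite]
      refine Finset.sum_congr rfl fun ω _ => ?_
      refine if_congr ?_ rfl rfl
      constructor <;> (intro hh; simp only [Prod.ext_iff] at hh ⊢; tauto)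
    rw [e1, h (a, b), Fintype.card_prod, Fintype.card_prod, Nat.mul_comm]
  exact probOf_fst_unif μ hμ1 Y X h' t

/-- if the pair (X,Y) is uniform over the full product, then I(X;Y)=0. -/
lemma MI_zero_of_unif {S T : Type*} [Fintype S] [Fintype T] [Nonempty S] [Nonempty T]
    (hμ1 : ∑ ω, μ ω = 1) (X : Ω → S) (Y : Ω → T)
    (h : ∀ v : S × T, probOf μ (fun ω => (X ω, Y ω)) v = (Fintype.card (S × T) : ℝ)⁻¹) :
    MI μ X Y = 0 := by
  have hS : (0:ℝ) < Fintype.card S := by exact_mod_cast Fintype.card_pos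
  have hT : (0:ℝ) < Fintype.card T := by exact_mod_cast Fintype.card_pos
  have hX := Hent_unif μ X (probOf_fst_unif μ hμ1 X Y h)
  have hY := Hent_unif μ Y (probOf_snd_unif μ hμ1 X Y h)
  have hXY := Hent_unif μ (fun ω => (X ω, Y ω)) h
  rw [MI, hX, hY, hXY, Fintype.card_prod]
  push_cast
  rw [Real.logb_mul hS.ne' hT.ne']
  ring

end Unif

/-- Lemma 3 of the paper: in K-user secure summation with user selection over `F` (= F_q)
with inputs of length `L`, for every selected set `U`, every `k ∈ U` and every
`V ⊊ U∖{k}`, we have H(W_k | X_k^U, (W_i, X_i^U)_{i∈V}) ≥ L·log₂ q. -/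
theorem secure_summation_entropy_lower_bound
    (K L q : ℕ) (hK : 1 ≤ K) (hL : 1 ≤ L) (hq : IsPrimePow q)
    (F : Type) [Field F] [Fintype F] (hF : Fintype.card F = q)
    (Ω : Type) [Fintype Ω] (μ : Ω → ℝ)
    (hμ0 : ∀ ω, 0 ≤ μ ω) (hμ1 : (∑ ω, μ ω) = 1)
    (SZ : Fin K → Type) [∀ k, Fintype (SZ k)]
    (M : Finset (Fin K) → Fin K → Type) [∀ U k, Fintype (M U k)]
    (W : Fin K → Ω → (Fin L → F)) (Z : ∀ k : Fin K, Ω → SZ k)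
    (X : ∀ (U : Finset (Fin K)) (k : Fin K), Ω → M U k)
    -- the inputs W_1, …, W_K are i.i.d. uniform over F_q^L
    (hWunif : ∀ w : Fin K → Fin L → F,
      probOf μ (fun ω (k : Fin K) => W k ω) w = ((q : ℝ) ^ (L * K))⁻¹)
    -- (W_1,…,W_K) is independent of (Z_1,…,Z_K)
    (hWZind : ∀ (w : Fin K → Fin L → F) (z : ∀ k : Fin K, SZ k),
      probOf μ (fun ω => ((fun k : Fin K => W k ω), (fun k : Fin K => Z k ω))) (w, z)
        = probOf μ (fun ω (k : Fin K) => W k ω) w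
            * probOf μ (fun ω (k : Fin K) => Z k ω) z)
    -- each message X_k^U is a deterministic function of (W_k, Z_k)
    (hXdet : ∀ (U : Finset (Fin K)) (k : Fin K), k ∈ U →
      ∃ f : (Fin L → F) → SZ k → M U k, ∀ ω, X U k ω = f (W k ω) (Z k ω))
    -- correctness: H(Σ_{k∈U} W_k | (X_k^U)_{k∈U}) = 0
    (hcorr : ∀ U : Finset (Fin K),
      Hcond μ (fun ω => ∑ k ∈ U, W k ω) (fun ω (k : ↥U) => X U k.1 ω) = 0)
    -- security: I((W_k)_{k∈U}; (X_k^U)_{k∈U} | Σ_{k∈U} W_k) = 0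
    (hsec : ∀ U : Finset (Fin K),
      CMI μ (fun ω (k : ↥U) => W k.1 ω) (fun ω (k : ↥U) => X U k.1 ω)
        (fun ω => ∑ k ∈ U, W k ω) = 0) :
    ∀ (U : Finset (Fin K)) (k : Fin K), k ∈ U → ∀ V : Finset (Fin K), V ⊂ U.erase k →
      Hcond μ (W k)
        (fun ω => (X U k ω, fun i : ↥V => (W i.1 ω, X U i.1 ω)))
        ≥ (L : ℝ) * Real.logb 2 q := by
  classical
  intro U k hkU V hV
  haveI : Nonempty F := ⟨0⟩
  -- pick the masking user j
  obtain ⟨j, hjE, hjV⟩ := Finset.exists_of_ssubset hV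
  have hjk : j ≠ k := Finset.ne_of_mem_erase hjE
  have hjU : j ∈ U := Finset.mem_of_mem_erase hjE
  have hVU : ∀ {i : Fin K}, i ∈ V → i ∈ U := fun hi => Finset.mem_of_mem_erase (hV.subset hi)
  have hVk : ∀ {i : Fin K}, i ∈ V → i ≠ k := fun hi => Finset.ne_of_mem_erase (hV.subset hi)
  have hkV : k ∉ V := fun hk => (hVk hk) rfl
  -- value-level map defining the pair ((W_k, W_V), Σ_U W)
  set φp : (Fin K → Fin L → F) → (((Fin L → F) × (↥V → Fin L → F)) × (Fin L → F)) :=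
    fun w => ((w k, fun i : ↥V => w i.1), ∑ i ∈ U, w i) with hφp
  -- translations between fibers of φp
  have hequiv : ∀ t t' : (((Fin L → F) × (↥V → Fin L → F)) × (Fin L → F)),
      ∃ e : (Fin K → Fin L → F) ≃ (Fin K → Fin L → F), ∀ w, φp w = t → φp (e w) = t' := by
    rintro ⟨⟨a, b⟩, s⟩ ⟨⟨a', b'⟩, s'⟩
    set δ : Fin K → Fin L → F := fun i =>
      if i = k then a' - a
      else if h : i ∈ V then b' ⟨i, h⟩ - b ⟨i, h⟩
      else if i = j then (s' - s) - (a' - a) - ∑ i : ↥V, (b' i - b i)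
      else 0 with hδ
    have hδk : δ k = a' - a := by simp [hδ]
    have hδj : δ j = (s' - s) - (a' - a) - ∑ i : ↥V, (b' i - b i) := by
      simp [hδ, hjk, hjV]
    have hδV : ∀ (i : Fin K) (h : i ∈ V), δ i = b' ⟨i, h⟩ - b ⟨i, h⟩ := by
      intro i h
      simp [hδ, hVk h, h]
    have hsub : insert k (insert j V) ⊆ U := by
      refine Finset.insert_subset hkU (Finset.insert_subset hjU ?_)
      intro i hi; exact hVU hi
    have hknotin : k ∉ insert j V := by
      simp only [Finset.mem_insert]
      push_neg
      exact ⟨hjk.symm, hkV⟩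
    have hsumV : ∑ i ∈ V, δ i = ∑ i : ↥V, (b' i - b i) := by
      rw [← Finset.sum_attach V δ, Finset.univ_eq_attach]
      refine Finset.sum_congr rfl fun x _ => ?_
      rw [hδV x.1 x.2]
    have hδsum : ∑ i ∈ U, δ i = s' - s := by
      rw [← Finset.sum_subset hsub (by
        intro i hiU hin
        simp only [Finset.mem_insert] at hin
        push_neg at hin
        simp [hδ, hin.1, hin.2.1, hin.2.2])]
      rw [Finset.sum_insert hknotin, Finset.sum_insert hjV, hδk, hδj, hsumV]
      abel
    refine ⟨Equiv.addRight δ, ?_⟩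
    intro w hw
    simp only [hφp, Prod.mk.injEq] at hw
    obtain ⟨⟨hwk, hwb⟩, hws⟩ := hw
    simp only [hφp, Equiv.coe_addRight, Prod.mk.injEq]
    refine ⟨⟨?_, ?_⟩, ?_⟩
    · rw [Pi.add_apply, hwk, hδk]; abel
    · funext i
      rw [Pi.add_apply, hδV i.1 i.2, congrFun hwb i, Subtype.coe_eta]
      abel
    · rw [Finset.sum_congr rfl (fun i _ => Pi.add_apply w δ i), Finset.sum_add_distrib,
          hws, hδsum]
      abel
  -- uniformity of ((W_k, W_V), Σ_U W)
  have hPSunif : ∀ v : (((Fin L → F) × (↥V → Fin L → F)) × (Fin L → F)),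
      probOf μ (fun ω => ((W k ω, fun i : ↥V => W i.1 ω), ∑ i ∈ U, W i ω)) v
        = (Fintype.card (((Fin L → F) × (↥V → Fin L → F)) × (Fin L → F)) : ℝ)⁻¹ := by
    intro v
    exact probOf_comp_unif μ hμ1 (fun ω (i : Fin K) => W i ω) φp (((q : ℝ) ^ (L * K))⁻¹)
      hWunif hequiv v
  -- marginal: (W_k, W_V) is uniform
  have hPunif : ∀ v : ((Fin L → F) × (↥V → Fin L → F)),
      probOf μ (fun ω => (W k ω, fun i : ↥V => W i.1 ω)) v
        = (Fintype.card ((Fin L → F) × (↥V → Fin L → F)) : ℝ)⁻¹ :=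
    fun v => probOf_fst_unif μ hμ1
      (fun ω => (W k ω, fun i : ↥V => W i.1 ω)) (fun ω => ∑ i ∈ U, W i ω) hPSunif v
  -- marginal: W_k is uniform
  have hAunif : ∀ v : (Fin L → F),
      probOf μ (W k) v = (Fintype.card (Fin L → F) : ℝ)⁻¹ :=
    fun v => probOf_fst_unif μ hμ1 (W k) (fun ω (i : ↥V) => W i.1 ω) hPunif v
  -- entropy of W_k
  have hHA : Hent μ (W k) = (L : ℝ) * Real.logb 2 q := by
    rw [Hent_unif μ (W k) hAunif]
    have hcard : Fintype.card (Fin L → F) = q ^ L := by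
      rw [Fintype.card_fun, hF, Fintype.card_fin]
    rw [hcard]
    push_cast
    rw [Real.logb_pow]
  -- the chain of information inequalities
  have h1 : MI μ (W k) (fun ω => (X U k ω, fun i : ↥V => (W i.1 ω, X U i.1 ω)))
      ≤ MI μ (W k) (fun ω => ((fun i : ↥U => X U i.1 ω), (fun i : ↥V => W i.1 ω))) :=
    MI_data_proc μ hμ0 hμ1 (W k)
      (fun ω => ((fun i : ↥U => X U i.1 ω), (fun i : ↥V => W i.1 ω)))
      (fun cb => (cb.1 ⟨k, hkU⟩, fun i : ↥V => (cb.2 i, cb.1 ⟨i.1, hVU i.2⟩)))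
  have h2 : MI μ (W k) (fun ω => ((fun i : ↥U => X U i.1 ω), (fun i : ↥V => W i.1 ω)))
      = MI μ (W k) (fun ω (i : ↥V) => W i.1 ω)
        + CMI μ (W k) (fun ω (i : ↥U) => X U i.1 ω) (fun ω (i : ↥V) => W i.1 ω) :=
    MI_chain μ hμ0 hμ1 (W k) (fun ω (i : ↥U) => X U i.1 ω) (fun ω (i : ↥V) => W i.1 ω)
  have h3 : MI μ (W k) (fun ω (i : ↥V) => W i.1 ω) = 0 :=
    MI_zero_of_unif μ hμ1 (W k) (fun ω (i : ↥V) => W i.1 ω) hPunif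
  have h4 : CMI μ (W k) (fun ω (i : ↥U) => X U i.1 ω) (fun ω (i : ↥V) => W i.1 ω)
      ≤ MI μ (fun ω => (W k ω, fun i : ↥V => W i.1 ω)) (fun ω (i : ↥U) => X U i.1 ω) :=
    CMI_le_MI_pair μ hμ0 hμ1 (W k) (fun ω (i : ↥V) => W i.1 ω) (fun ω (i : ↥U) => X U i.1 ω)
  have h5 : MI μ (fun ω => (W k ω, fun i : ↥V => W i.1 ω)) (fun ω (i : ↥U) => X U i.1 ω)
      ≤ MI μ (fun ω => (W k ω, fun i : ↥V => W i.1 ω))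
          (fun ω => ((fun i : ↥U => X U i.1 ω), ∑ i ∈ U, W i ω)) :=
    MI_le_MI_pair_right μ hμ0 hμ1 (fun ω => (W k ω, fun i : ↥V => W i.1 ω))
      (fun ω (i : ↥U) => X U i.1 ω) (fun ω => ∑ i ∈ U, W i ω)
  have h6 : MI μ (fun ω => (W k ω, fun i : ↥V => W i.1 ω))
      (fun ω => ((fun i : ↥U => X U i.1 ω), ∑ i ∈ U, W i ω))
      = MI μ (fun ω => (W k ω, fun i : ↥V => W i.1 ω)) (fun ω => ∑ i ∈ U, W i ω)
        + CMI μ (fun ω => (W k ω, fun i : ↥V => W i.1 ω)) (fun ω (i : ↥U) => X U i.1 ω)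
            (fun ω => ∑ i ∈ U, W i ω) :=
    MI_chain μ hμ0 hμ1 (fun ω => (W k ω, fun i : ↥V => W i.1 ω)) (fun ω (i : ↥U) => X U i.1 ω)
      (fun ω => ∑ i ∈ U, W i ω)
  have h7 : MI μ (fun ω => (W k ω, fun i : ↥V => W i.1 ω)) (fun ω => ∑ i ∈ U, W i ω) = 0 :=
    MI_zero_of_unif μ hμ1 (fun ω => (W k ω, fun i : ↥V => W i.1 ω))
      (fun ω => ∑ i ∈ U, W i ω) hPSunif
  have h8 : CMI μ (fun ω => (W k ω, fun i : ↥V => W i.1 ω)) (fun ω (i : ↥U) => X U i.1 ω)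
        (fun ω => ∑ i ∈ U, W i ω)
      ≤ CMI μ (fun ω (i : ↥U) => W i.1 ω) (fun ω (i : ↥U) => X U i.1 ω)
          (fun ω => ∑ i ∈ U, W i ω) :=
    CMI_mono_left μ hμ0 hμ1 (fun ω (i : ↥U) => W i.1 ω)
      (fun r => (r ⟨k, hkU⟩, fun i : ↥V => r ⟨i.1, hVU i.2⟩))
      (fun ω (i : ↥U) => X U i.1 ω) (fun ω => ∑ i ∈ U, W i ω)
  have h9 : CMI μ (fun ω (i : ↥U) => W i.1 ω) (fun ω (i : ↥U) => X U i.1 ω)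
      (fun ω => ∑ i ∈ U, W i ω) = 0 := hsec U
  have hMIle : MI μ (W k) (fun ω => (X U k ω, fun i : ↥V => (W i.1 ω, X U i.1 ω))) ≤ 0 := by
    linarith
  have hHcond : Hcond μ (W k) (fun ω => (X U k ω, fun i : ↥V => (W i.1 ω, X U i.1 ω)))
      = Hent μ (W k)
        - MI μ (W k) (fun ω => (X U k ω, fun i : ↥V => (W i.1 ω, X U i.1 ω))) := by
    unfold Hcond MI
    ring
  rw [ge_iff_le, hHcond, hHA]
  linarith
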